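/- arXiv:1009.0098 — 7 statements merged into one kernel-verified Lean document; each statement's English description precedes it below -/
import Mathlib

section
/- Let p be a prime, n a natural number, and t ∈ ℤ_p a p-adic integer. Then the Volkenborn sums of the function x ↦ (t + x)^n converge to the value of the n-th Bernoulli polynomial at t; that is, in ℚ_p, the sequence N ↦ (1/p^N) · ∑_{x=0}^{p^N − 1} (t + x)^n tends (as N → ∞) to B_n(t), where B_n(t) denotes the evaluation at t of the n-th Bernoulli polynomial (a polynomial with rational coefficients, evaluated in ℚ_p). -/
open Polynomial Filter

lemma bernoulli_comp_X_add_one (n : ℕ) :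
    (Polynomial.bernoulli n).comp (X + 1) =
      Polynomial.bernoulli n + (n : ℚ) • X ^ (n - 1) := by
  apply Polynomial.funext
  intro r
  simp [eval_comp, Polynomial.bernoulli_eval_one_add n r, add_comm r 1]

lemma aeval_bernoulli_add_one (p : ℕ) [Fact p.Prime] (n : ℕ) (x : ℚ_[p]) :
    aeval (x + 1) (Polynomial.bernoulli n) =
      aeval x (Polynomial.bernoulli n) + (n : ℚ_[p]) * x ^ (n - 1) := by
  have h := congrArg (aeval x) (bernoulli_comp_X_add_one n)
  simpa [aeval_comp, Algebra.smul_def] using h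

lemma telescope (p : ℕ) [Fact p.Prime] (n : ℕ) (t : ℤ_[p]) (M : ℕ) :
    ((n : ℚ_[p]) + 1) * ∑ x ∈ Finset.range M, ((t : ℚ_[p]) + (x : ℚ_[p])) ^ n =
      aeval ((t : ℚ_[p]) + (M : ℚ_[p])) (Polynomial.bernoulli (n + 1)) -
      aeval ((t : ℚ_[p]) : ℚ_[p]) (Polynomial.bernoulli (n + 1)) := by
  induction M with
  | zero => simp
  | succ M ih =>
    rw [Finset.sum_range_succ, mul_add, ih]
    have h := aeval_bernoulli_add_one p (n + 1) ((t : ℚ_[p]) + (M : ℚ_[p]))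
    push_cast at h ⊢
    rw [show (t : ℚ_[p]) + ((M : ℚ_[p]) + 1) = ((t : ℚ_[p]) + (M : ℚ_[p])) + 1 by ring, h]
    ring

/-- The Volkenborn sums of `x ↦ (t + x)^n` converge in `ℚ_p` to the value `B_n(t)`
of the `n`-th Bernoulli polynomial at `t ∈ ℤ_p`. -/
theorem volkenborn_tendsto_bernoulliPoly (p : ℕ) [Fact p.Prime] (n : ℕ) (t : ℤ_[p]) :
    Filter.Tendsto
      (fun N : ℕ => (1 / (p : ℚ_[p]) ^ N) *
        ∑ x ∈ Finset.range (p ^ N), ((t : ℚ_[p]) + (x : ℚ_[p])) ^ n)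
      Filter.atTop
      (nhds (Polynomial.aeval (t : ℚ_[p]) (Polynomial.bernoulli n))) := by
  set T : ℚ_[p] := (t : ℚ_[p]) with hT
  set f : ℚ_[p] → ℚ_[p] := fun x => ((n : ℚ_[p]) + 1)⁻¹ * aeval x (Polynomial.bernoulli (n + 1))
    with hf
  have hn1 : ((n : ℚ_[p]) + 1) ≠ 0 := by
    exact_mod_cast (Nat.cast_ne_zero (R := ℚ_[p])).mpr (Nat.succ_ne_zero n)
  -- derivative of f at T is aeval T (bernoulli n)
  have hderiv : HasDerivAt f (aeval T (Polynomial.bernoulli n)) T := by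
    have h1 := (Polynomial.bernoulli (n + 1)).hasDerivAt_aeval (R := ℚ) (𝕜 := ℚ_[p]) T
    have h2 := h1.const_mul (((n : ℚ_[p]) + 1)⁻¹)
    rw [Polynomial.derivative_bernoulli_add_one] at h2
    refine h2.congr_deriv ?_
    rw [map_mul, ← mul_assoc]
    have : aeval T (((n : ℕ) : ℚ[X]) + 1) = ((n : ℚ_[p]) + 1) := by simp
    rw [this, inv_mul_cancel₀ hn1, one_mul]
  have hslope := hasDerivAt_iff_tendsto_slope.mp hderiv
  -- the sequence T + p^N tends to T within {T}ᶜ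
  have hpne : (p : ℚ_[p]) ≠ 0 := by
    exact_mod_cast Nat.cast_ne_zero.mpr (Fact.out : p.Prime).ne_zero
  have hseq : Tendsto (fun N : ℕ => T + (p : ℚ_[p]) ^ N) atTop (nhdsWithin T {T}ᶜ) := by
    apply tendsto_nhdsWithin_of_tendsto_nhds_of_eventually_within
    · have : Tendsto (fun N : ℕ => (p : ℚ_[p]) ^ N) atTop (nhds 0) := by
        apply tendsto_pow_atTop_nhds_zero_of_norm_lt_one
        exact Padic.norm_p_lt_one
      simpa using (tendsto_const_nhds.add this)
    · filter_upwards with N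
      simp only [Set.mem_compl_iff, Set.mem_singleton_iff]
      intro h
      exact pow_ne_zero N hpne (by linear_combination h)
  have key := hslope.comp hseq
  -- identify the composed function with the Volkenborn sums
  have heq : ∀ N : ℕ, slope f T (T + (p : ℚ_[p]) ^ N) =
      (1 / (p : ℚ_[p]) ^ N) * ∑ x ∈ Finset.range (p ^ N), (T + (x : ℚ_[p])) ^ n := by
    intro N
    have htel := telescope p n t (p ^ N)
    have hcast : ((p ^ N : ℕ) : ℚ_[p]) = (p : ℚ_[p]) ^ N := by push_cast; ring
    rw [hcast, show ((t : ℚ_[p])) = T from rfl] at htel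
    rw [slope_def_field, hf]
    simp only [add_sub_cancel_left]
    field_simp
    linear_combination (-1 : ℚ_[p]) * htel
  exact key.congr heq
end

section
/- Let p be a prime and let n ≥ k be natural numbers. Then, in ℚ_p, the sequence N ↦ (1/p^N) · ∑_{x=0}^{p^N − 1} C(n,k) x^k (1 − x)^{n−k} tends (as N → ∞) to the rational number C(n,k) · ∑_{j=0}^{n−k} C(n−k, j) (−1)^{n−k−j} B_{n−j}, cast into ℚ_p. (Equivalently, ∫_{ℤ_p} B_{k,n}(x) dμ₁(x) = C(n,k) ∑_{j=0}^{n−k} C(n−k,j)(−1)^{n−k−j} B_{n−j}.) -/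
open Finset Filter

lemma volkenborn_monomial (p : ℕ) [Fact p.Prime] (m : ℕ) :
    Tendsto (fun N : ℕ => (1 / (p : ℚ_[p]) ^ N) * ∑ x ∈ Finset.range (p ^ N), (x : ℚ_[p]) ^ m)
      atTop (nhds ((bernoulli m : ℚ) : ℚ_[p])) := by
  have hp : (p : ℚ) ≠ 0 := Nat.cast_ne_zero.mpr (Fact.out : p.Prime).ne_zero
  have key : ∀ N : ℕ, (1 / (p : ℚ_[p]) ^ N) * ∑ x ∈ Finset.range (p ^ N), (x : ℚ_[p]) ^ m
      = ∑ i ∈ range (m + 1),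
          ((bernoulli i * ((m + 1).choose i) / (m + 1) : ℚ) : ℚ_[p]) * ((p : ℚ_[p]) ^ (m - i)) ^ N := by
    intro N
    have hq : (1 / (p : ℚ) ^ N) * ∑ x ∈ Finset.range (p ^ N), (x : ℚ) ^ m
        = ∑ i ∈ range (m + 1),
            (bernoulli i * ((m + 1).choose i) / (m + 1) : ℚ) * ((p : ℚ) ^ (m - i)) ^ N := by
      rw [sum_range_pow, mul_sum]
      refine Finset.sum_congr rfl fun i hi => ?_
      have hi' : i ≤ m := by simpa using Nat.lt_succ_iff.mp (mem_range.mp hi)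
      have h1 : m + 1 - i = (m - i) + 1 := by omega
      push_cast
      rw [h1, pow_succ, ← pow_mul, ← pow_mul]
      field_simp
      ring
    calc (1 / (p : ℚ_[p]) ^ N) * ∑ x ∈ Finset.range (p ^ N), (x : ℚ_[p]) ^ m
        = (((1 / (p : ℚ) ^ N) * ∑ x ∈ Finset.range (p ^ N), (x : ℚ) ^ m : ℚ) : ℚ_[p]) := by
          push_cast; ring
      _ = _ := by rw [hq]; push_cast; ring
  simp only [key]
  have hlim : Tendsto (fun N : ℕ => ∑ i ∈ range (m + 1),
      ((bernoulli i * ((m + 1).choose i) / (m + 1) : ℚ) : ℚ_[p]) * ((p : ℚ_[p]) ^ (m - i)) ^ N)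
      atTop (nhds (∑ i ∈ range (m + 1),
        if i = m then ((bernoulli m : ℚ) : ℚ_[p]) else 0)) := by
    refine tendsto_finset_sum _ fun i hi => ?_
    have hi' : i ≤ m := Nat.lt_succ_iff.mp (mem_range.mp hi)
    rcases eq_or_lt_of_le hi' with rfl | hlt
    · simp only [if_pos rfl, Nat.sub_self, pow_zero, one_pow, mul_one]
      have : ((bernoulli i * ((i + 1).choose i) / (i + 1) : ℚ) : ℚ_[p])
          = ((bernoulli i : ℚ) : ℚ_[p]) := by
        congr 1
        rw [Nat.choose_succ_self_right]
        field_simp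
        push_cast
        ring
      rw [this]
      exact tendsto_const_nhds
    · rw [if_neg hlt.ne]
      have hnorm : ‖(p : ℚ_[p]) ^ (m - i)‖ < 1 := by
        rw [norm_pow]
        calc ‖(p : ℚ_[p])‖ ^ (m - i) ≤ ‖(p : ℚ_[p])‖ := by
              apply pow_le_of_le_one (norm_nonneg _) Padic.norm_p_lt_one.le
              omega
          _ < 1 := Padic.norm_p_lt_one
      simpa using
        (tendsto_pow_atTop_nhds_zero_of_norm_lt_one hnorm).const_mul
          ((bernoulli i * ((m + 1).choose i) / (m + 1) : ℚ) : ℚ_[p])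
  convert hlim using 2
  rw [Finset.sum_ite_eq' (range (m+1)) m]
  simp

/-- `∫_{ℤ_p} B_{k,n}(x) dμ₁(x) = C(n,k) ∑_{j=0}^{n−k} C(n−k,j)(−1)^{n−k−j} B_{n−j}`. -/
theorem volkenborn_bernstein_eq_sum_bernoulli (p : ℕ) [Fact p.Prime] (n k : ℕ) (hkn : k ≤ n) :
    Filter.Tendsto
      (fun N : ℕ => (1 / (p : ℚ_[p]) ^ N) *
        ∑ x ∈ Finset.range (p ^ N),
          (n.choose k : ℚ_[p]) * (x : ℚ_[p]) ^ k * (1 - (x : ℚ_[p])) ^ (n - k))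
      Filter.atTop
      (nhds (((n.choose k : ℚ) * ∑ j ∈ Finset.range (n - k + 1),
        ((n - k).choose j : ℚ) * (-1 : ℚ) ^ (n - k - j) * bernoulli (n - j) : ℚ) : ℚ_[p])) := by
  set m := n - k with hm
  have pointwise : ∀ x : ℚ_[p], (n.choose k : ℚ_[p]) * x ^ k * (1 - x) ^ m
      = ∑ j ∈ Finset.range (m + 1),
          ((n.choose k : ℚ_[p]) * (m.choose j : ℚ_[p]) * (-1 : ℚ_[p]) ^ (m - j)) * x ^ (n - j) := by
    intro x
    have h1 : (1 - x) ^ m = ∑ j ∈ Finset.range (m + 1),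
        (1 : ℚ_[p]) ^ j * (-x) ^ (m - j) * (m.choose j : ℚ_[p]) := by
      rw [← add_pow]; ring_nf
    rw [h1, Finset.mul_sum]
    refine Finset.sum_congr rfl fun j hj => ?_
    have hj' : j ≤ m := Nat.lt_succ_iff.mp (Finset.mem_range.mp hj)
    have hx : x ^ k * x ^ (m - j) = x ^ (n - j) := by
      rw [← pow_add]; congr 1; omega
    rw [neg_pow]
    calc (n.choose k : ℚ_[p]) * x ^ k * (1 ^ j * ((-1 : ℚ_[p]) ^ (m - j) * x ^ (m - j)) * (m.choose j : ℚ_[p]))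
        = ((n.choose k : ℚ_[p]) * (m.choose j : ℚ_[p]) * (-1 : ℚ_[p]) ^ (m - j)) * (x ^ k * x ^ (m - j)) := by ring
      _ = _ := by rw [hx]
  have key : ∀ N : ℕ, (1 / (p : ℚ_[p]) ^ N) *
      ∑ x ∈ Finset.range (p ^ N),
        (n.choose k : ℚ_[p]) * (x : ℚ_[p]) ^ k * (1 - (x : ℚ_[p])) ^ m
      = ∑ j ∈ Finset.range (m + 1),
          ((n.choose k : ℚ_[p]) * (m.choose j : ℚ_[p]) * (-1 : ℚ_[p]) ^ (m - j)) *
            ((1 / (p : ℚ_[p]) ^ N) * ∑ x ∈ Finset.range (p ^ N), (x : ℚ_[p]) ^ (n - j)) := by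
    intro N
    simp_rw [pointwise]
    rw [Finset.sum_comm, Finset.mul_sum]
    refine Finset.sum_congr rfl fun j hj => ?_
    rw [← Finset.mul_sum]
    ring
  simp only [key]
  have hlim : Filter.Tendsto (fun N : ℕ => ∑ j ∈ Finset.range (m + 1),
      ((n.choose k : ℚ_[p]) * (m.choose j : ℚ_[p]) * (-1 : ℚ_[p]) ^ (m - j)) *
        ((1 / (p : ℚ_[p]) ^ N) * ∑ x ∈ Finset.range (p ^ N), (x : ℚ_[p]) ^ (n - j)))
      Filter.atTop (nhds (∑ j ∈ Finset.range (m + 1),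
        ((n.choose k : ℚ_[p]) * (m.choose j : ℚ_[p]) * (-1 : ℚ_[p]) ^ (m - j)) *
          ((bernoulli (n - j) : ℚ) : ℚ_[p]))) := by
    exact tendsto_finset_sum _ fun j _ =>
      ((volkenborn_monomial p (n - j)).const_mul _)
  convert hlim using 2
  push_cast
  rw [Finset.mul_sum]
  exact Finset.sum_congr rfl fun j _ => by ring
end

section
/- For all natural numbers n ≥ k, the following identity of rational numbers holds: ∑_{j=0}^{n−k} C(n−k, j) (−1)^{n−k−j} B_{n−j} = ∑_{j=0}^{k} C(k, j) (−1)^{k−j} · ∑_{l=0}^{n−j} C(n−j, l) (−1)^l B_l. -/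
lemma binom_alt_sum (k : ℕ) : ∀ n l : ℕ, k ≤ n →
    ∑ j ∈ Finset.range (k+1), (-1:ℚ)^j * (k.choose j) * ((n-j).choose l)
      = if k ≤ l then ((n-k).choose (l-k) : ℚ) else 0 := by
  induction k with
  | zero => intro n l _; simp
  | succ k ih =>
    intro n l hn
    set f : ℕ → ℚ := fun j => (-1:ℚ)^j * (k.choose j) * ((n-j).choose l) with hf
    set g : ℕ → ℚ := fun j => (-1:ℚ)^j * (k.choose j) * (((n-1)-j).choose l) with hg
    have hstep : ∑ j ∈ Finset.range (k+2), (-1:ℚ)^j * ((k+1).choose j) * ((n-j).choose l)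
        = (∑ j ∈ Finset.range (k+1), f j) - ∑ j ∈ Finset.range (k+1), g j := by
      rw [Finset.sum_range_succ' (fun j => (-1:ℚ)^j * ((k+1).choose j) * ((n-j).choose l))]
      have h1 : ∀ j ∈ Finset.range (k+1),
          (-1:ℚ)^(j+1) * ((k+1).choose (j+1)) * ((n-(j+1)).choose l)
          = f (j+1) + (- g j) := by
        intro j _
        have hnj : n - (j+1) = (n-1) - j := by omega
        simp only [hf, hg, hnj, Nat.choose_succ_succ]
        push_cast
        ring
      rw [Finset.sum_congr rfl h1, Finset.sum_add_distrib, Finset.sum_neg_distrib]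
      have h2 : (∑ j ∈ Finset.range (k+1), f (j+1)) + f 0
          = ∑ j ∈ Finset.range (k+1), f j := by
        have h3 := Finset.sum_range_succ' f (k+1)
        rw [Finset.sum_range_succ f (k+1)] at h3
        have : f (k+1) = 0 := by simp [hf, Nat.choose_succ_self]
        rw [this, add_zero] at h3
        linarith [h3]
      have hF0 : (-1:ℚ)^0 * (((k+1).choose 0 : ℕ) : ℚ) * ((n-0).choose l) = f 0 := by
        simp [hf]
      rw [hF0]
      linarith [h2]
    rw [hstep, ih n l (by omega), ih (n-1) l (by omega)]
    have hnn : n - 1 - k = n - (k+1) := by omega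
    rw [hnn]
    rcases lt_trichotomy l k with h | h | h
    · rw [if_neg (by omega), if_neg (by omega), if_neg (by omega)]; ring
    · subst h
      rw [if_pos le_rfl, if_pos le_rfl, if_neg (by omega)]
      simp
    · rw [if_pos (by omega), if_pos (by omega), if_pos (show k+1 ≤ l from h)]
      have h1 : l - k = (l - (k+1)) + 1 := by omega
      have h2 : n - k = (n - (k+1)) + 1 := by omega
      rw [h1, h2, Nat.choose_succ_succ]
      push_cast
      ring

lemma neg_one_pow_sub (k j : ℕ) (hj : j ≤ k) : (-1:ℚ)^(k-j) = (-1)^k * (-1)^j := by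
  have h2 : ((-1:ℚ))^j * (-1)^j = 1 := by
    rw [← pow_add]; exact Even.neg_one_pow ⟨j, rfl⟩
  calc (-1:ℚ)^(k-j) = (-1)^(k-j) * ((-1)^j * (-1)^j) := by rw [h2, mul_one]
    _ = (-1)^(k-j+j) * (-1)^j := by rw [pow_add]; ring
    _ = (-1)^k * (-1)^j := by rw [Nat.sub_add_cancel hj]

/-- Proposition: for `n ≥ k`,
`∑_{j=0}^{n−k} C(n−k,j)(−1)^{n−k−j} B_{n−j}
  = ∑_{j=0}^{k} C(k,j)(−1)^{k−j} ∑_{l=0}^{n−j} C(n−j,l)(−1)^l B_l`. -/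
theorem bernoulli_sum_identity (n k : ℕ) (hkn : k ≤ n) :
    ∑ j ∈ Finset.range (n - k + 1),
        ((n - k).choose j : ℚ) * (-1 : ℚ) ^ (n - k - j) * bernoulli (n - j)
      = ∑ j ∈ Finset.range (k + 1), (k.choose j : ℚ) * (-1 : ℚ) ^ (k - j) *
          ∑ l ∈ Finset.range (n - j + 1),
            ((n - j).choose l : ℚ) * (-1 : ℚ) ^ l * bernoulli l := by
  have hL : ∑ j ∈ Finset.range (n - k + 1),
        ((n - k).choose j : ℚ) * (-1 : ℚ) ^ (n - k - j) * bernoulli (n - j)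
      = ∑ i ∈ Finset.range (n - k + 1),
          (-1:ℚ)^i * ((n-k).choose i) * bernoulli (k+i) := by
    rw [← Finset.sum_range_reflect
      (fun i => (-1:ℚ)^i * ((n-k).choose i) * bernoulli (k+i)) (n-k+1)]
    apply Finset.sum_congr rfl
    intro j hj
    simp only [Finset.mem_range] at hj
    have hj' : j ≤ n - k := by omega
    have h1 : n - k + 1 - 1 - j = n - k - j := by omega
    have h2 : k + (n - k - j) = n - j := by omega
    have h3 : (n-k).choose (n-k-j) = (n-k).choose j := Nat.choose_symm hj'
    rw [h1, h2, h3]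
    ring
  rw [hL]
  have hR1 : ∀ j ∈ Finset.range (k+1),
      (k.choose j : ℚ) * (-1 : ℚ) ^ (k - j) *
          ∑ l ∈ Finset.range (n - j + 1),
            ((n - j).choose l : ℚ) * (-1 : ℚ) ^ l * bernoulli l
      = ∑ l ∈ Finset.range (n + 1),
          ((-1:ℚ)^l * bernoulli l) *
            ((-1)^k * ((-1:ℚ)^j * (k.choose j) * ((n-j).choose l))) := by
    intro j hj
    simp only [Finset.mem_range] at hj
    have hext : ∑ l ∈ Finset.range (n - j + 1),
          ((n - j).choose l : ℚ) * (-1 : ℚ) ^ l * bernoulli l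
        = ∑ l ∈ Finset.range (n + 1),
          ((n - j).choose l : ℚ) * (-1 : ℚ) ^ l * bernoulli l := by
      apply Finset.sum_subset
      · exact Finset.range_subset_range.2 (by omega)
      · intro l hl hnl
        simp only [Finset.mem_range] at hl hnl
        have : n - j < l := by omega
        simp [Nat.choose_eq_zero_of_lt this]
    rw [hext, Finset.mul_sum]
    apply Finset.sum_congr rfl
    intro l _
    rw [neg_one_pow_sub k j (by omega)]
    ring
  rw [Finset.sum_congr rfl hR1, Finset.sum_comm]
  have hR2 : ∀ l ∈ Finset.range (n+1),
      ∑ j ∈ Finset.range (k+1),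
          ((-1:ℚ)^l * bernoulli l) *
            ((-1)^k * ((-1:ℚ)^j * (k.choose j) * ((n-j).choose l)))
      = ((-1:ℚ)^l * bernoulli l) * ((-1)^k *
          (if k ≤ l then ((n-k).choose (l-k) : ℚ) else 0)) := by
    intro l _
    rw [← binom_alt_sum k n l hkn]
    simp only [Finset.mul_sum]
  rw [Finset.sum_congr rfl hR2]
  rw [show ∑ l ∈ Finset.range (n+1),
        ((-1:ℚ)^l * bernoulli l) * ((-1)^k *
          (if k ≤ l then ((n-k).choose (l-k) : ℚ) else 0))
      = ∑ l ∈ Finset.Ico k (n+1),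
        ((-1:ℚ)^l * bernoulli l) * ((-1)^k *
          (if k ≤ l then ((n-k).choose (l-k) : ℚ) else 0)) from
    (Finset.sum_subset (fun l hl => Finset.mem_range.2
        (by simp only [Finset.mem_Ico] at hl; omega))
      (fun l hl hnl => by
        simp only [Finset.mem_Ico, not_and, not_lt] at hnl
        simp only [Finset.mem_range] at hl
        have hne : ¬ k ≤ l := fun h => by have := hnl h; omega
        rw [if_neg hne]; ring)).symm]
  rw [Finset.sum_Ico_eq_sum_range]
  have hrange : n + 1 - k = n - k + 1 := by omega
  rw [hrange]
  apply Finset.sum_congr rfl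
  intro i hi
  simp only [Finset.mem_range] at hi
  rw [if_pos (by omega : k ≤ k + i)]
  have h1 : k + i - k = i := by omega
  rw [h1, pow_add]
  have h2 : ((-1:ℚ))^k * (-1)^k = 1 := by
    rw [← pow_add]; exact Even.neg_one_pow ⟨k, rfl⟩
  linear_combination (-((-1:ℚ)^i * (((n-k).choose i : ℕ) : ℚ) * bernoulli (k+i))) * h2
end

section
/- Let p be a prime and let k, n, m be natural numbers with k ≤ n and k ≤ m. Then, in ℚ_p, the sequence N ↦ (1/p^N) · ∑_{x=0}^{p^N − 1} B_{k,n}(x) · B_{k,m}(x) tends (as N → ∞) to the rational number C(n,k) C(m,k) · ∑_{l=0}^{n+m−2k} C(n+m−2k, l) (−1)^l B_{2k+l}, cast into ℚ_p. (Equivalently, ∫_{ℤ_p} B_{k,n}(x) B_{k,m}(x) dμ₁(x) = C(n,k)C(m,k) ∑_{l=0}^{n+m−2k} C(n+m−2k,l)(−1)^l B_{2k+l}.) -/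
open Finset Filter

lemma aux_volkenborn_pow (p : ℕ) [Fact p.Prime] (j : ℕ) :
    Tendsto (fun N : ℕ => (1 / (p : ℚ_[p]) ^ N) * ∑ x ∈ range (p ^ N), (x : ℚ_[p]) ^ j)
      atTop (nhds ((bernoulli j : ℚ) : ℚ_[p])) := by
  have hp0 : (p : ℚ_[p]) ≠ 0 := Nat.cast_ne_zero.mpr (Fact.out (p := p.Prime)).ne_zero
  have key : ∀ N : ℕ, (1 / (p : ℚ_[p]) ^ N) * ∑ x ∈ range (p ^ N), (x : ℚ_[p]) ^ j
      = ∑ i ∈ range (j + 1),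
          ((bernoulli i * ((j + 1).choose i) / (j + 1) : ℚ) : ℚ_[p]) * ((p : ℚ_[p]) ^ (j - i)) ^ N := by
    intro N
    have h2 : (∑ x ∈ range (p ^ N), (x : ℚ_[p]) ^ j)
        = ((∑ x ∈ range (p ^ N), (x : ℚ) ^ j : ℚ) : ℚ_[p]) := by push_cast ; ring
    rw [h2, sum_range_pow]
    push_cast
    rw [Finset.mul_sum]
    refine Finset.sum_congr rfl fun i hi => ?_
    have hij : i ≤ j := Nat.lt_succ_iff.mp (mem_range.mp hi)
    have hpow : ((p : ℚ_[p]) ^ N) ^ (j + 1 - i) = (p : ℚ_[p]) ^ N * ((p : ℚ_[p]) ^ (j - i)) ^ N := by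
      rw [← pow_mul, ← pow_mul, ← pow_add]
      congr 1
      have : j + 1 - i = (j - i) + 1 := by omega
      rw [this, Nat.mul_succ]
      ring
    rw [hpow]
    have hj1 : ((j : ℚ_[p]) + 1) ≠ 0 := Nat.cast_add_one_ne_zero j
    have hpN : (p : ℚ_[p]) ^ N ≠ 0 := pow_ne_zero _ hp0
    field_simp
  rw [show (fun N : ℕ => (1 / (p : ℚ_[p]) ^ N) * ∑ x ∈ range (p ^ N), (x : ℚ_[p]) ^ j)
      = fun N : ℕ => ∑ i ∈ range (j + 1),
          ((bernoulli i * ((j + 1).choose i) / (j + 1) : ℚ) : ℚ_[p]) * ((p : ℚ_[p]) ^ (j - i)) ^ N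
    from funext key]
  have hlim : ((bernoulli j : ℚ) : ℚ_[p]) = ∑ i ∈ range (j + 1),
      ((bernoulli i * ((j + 1).choose i) / (j + 1) : ℚ) : ℚ_[p]) *
        (if i = j then (1 : ℚ_[p]) else 0) := by
    rw [Finset.sum_eq_single j]
    · rw [if_pos rfl, mul_one, Nat.choose_succ_self_right]
      have : ((j : ℚ) + 1) ≠ 0 := by positivity
      rw [Nat.cast_succ, mul_div_assoc, div_self this, mul_one]
    · intro i _ hij
      rw [if_neg hij, mul_zero]
    · intro h
      exact absurd (self_mem_range_succ j) h
  rw [hlim]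
  refine tendsto_finset_sum _ fun i hi => ?_
  have hij : i ≤ j := Nat.lt_succ_iff.mp (mem_range.mp hi)
  rcases eq_or_lt_of_le hij with heq | hlt
  · subst heq
    simp only [Nat.sub_self, pow_zero, one_pow, if_pos rfl]
    exact tendsto_const_nhds
  · rw [if_neg hlt.ne, mul_zero]
    rw [show (0 : ℚ_[p]) = ((bernoulli i * ((j + 1).choose i) / (j + 1) : ℚ) : ℚ_[p]) * 0 by ring]
    refine Tendsto.const_mul _ ?_
    apply tendsto_pow_atTop_nhds_zero_of_norm_lt_one
    rw [norm_pow, Padic.norm_p]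
    have hp1 : 1 < p := (Fact.out (p := p.Prime)).one_lt
    have h1 : ((p : ℝ))⁻¹ < 1 := by
      rw [inv_lt_one_iff₀]
      right
      exact_mod_cast hp1
    have h0 : (0:ℝ) ≤ ((p : ℝ))⁻¹ := by positivity
    exact pow_lt_one₀ h0 h1 (by omega)

/-- `∫_{ℤ_p} B_{k,n}(x) B_{k,m}(x) dμ₁(x)
    = C(n,k)C(m,k) ∑_{l=0}^{n+m−2k} C(n+m−2k,l)(−1)^l B_{2k+l}`. -/
theorem volkenborn_bernstein_mul (p : ℕ) [Fact p.Prime] (n m k : ℕ)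
    (hkn : k ≤ n) (hkm : k ≤ m) :
    Filter.Tendsto
      (fun N : ℕ => (1 / (p : ℚ_[p]) ^ N) *
        ∑ x ∈ Finset.range (p ^ N),
          ((n.choose k : ℚ_[p]) * (x : ℚ_[p]) ^ k * (1 - (x : ℚ_[p])) ^ (n - k)) *
          ((m.choose k : ℚ_[p]) * (x : ℚ_[p]) ^ k * (1 - (x : ℚ_[p])) ^ (m - k)))
      Filter.atTop
      (nhds (((n.choose k : ℚ) * (m.choose k : ℚ) *
        ∑ l ∈ Finset.range (n + m - 2 * k + 1),
          ((n + m - 2 * k).choose l : ℚ) * (-1 : ℚ) ^ l * bernoulli (2 * k + l) : ℚ) : ℚ_[p])) := by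
  set d := n + m - 2 * k with hd
  set a : ℕ → ℚ_[p] := fun l =>
    (n.choose k : ℚ_[p]) * (m.choose k : ℚ_[p]) * (d.choose l : ℚ_[p]) * (-1 : ℚ_[p]) ^ l with ha
  have hsummand : ∀ x : ℚ_[p],
      ((n.choose k : ℚ_[p]) * x ^ k * (1 - x) ^ (n - k)) *
        ((m.choose k : ℚ_[p]) * x ^ k * (1 - x) ^ (m - k))
      = ∑ l ∈ range (d + 1), a l * x ^ (2 * k + l) := by
    intro x
    have h1 : (1 - x) ^ (n - k) * (1 - x) ^ (m - k) = (1 - x) ^ d := by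
      rw [← pow_add]
      congr 1
      omega
    have h2 : (1 - x) ^ d = ∑ l ∈ range (d + 1), (-1 : ℚ_[p]) ^ l * x ^ l * (d.choose l) := by
      rw [show (1 - x) = -x + 1 by ring, add_pow]
      refine Finset.sum_congr rfl fun l _ => ?_
      rw [neg_pow]
      ring
    calc ((n.choose k : ℚ_[p]) * x ^ k * (1 - x) ^ (n - k)) *
        ((m.choose k : ℚ_[p]) * x ^ k * (1 - x) ^ (m - k))
        = (n.choose k : ℚ_[p]) * (m.choose k : ℚ_[p]) * x ^ (2 * k) *
          ((1 - x) ^ (n - k) * (1 - x) ^ (m - k)) := by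
          rw [show 2 * k = k + k by ring, pow_add]; ring
      _ = (n.choose k : ℚ_[p]) * (m.choose k : ℚ_[p]) * x ^ (2 * k) *
          ∑ l ∈ range (d + 1), (-1 : ℚ_[p]) ^ l * x ^ l * (d.choose l) := by rw [h1, h2]
      _ = ∑ l ∈ range (d + 1), a l * x ^ (2 * k + l) := by
          rw [Finset.mul_sum]
          refine Finset.sum_congr rfl fun l _ => ?_
          rw [ha, pow_add]
          ring
  have hseq : ∀ N : ℕ, (1 / (p : ℚ_[p]) ^ N) *
      ∑ x ∈ range (p ^ N),
        ((n.choose k : ℚ_[p]) * (x : ℚ_[p]) ^ k * (1 - (x : ℚ_[p])) ^ (n - k)) *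
        ((m.choose k : ℚ_[p]) * (x : ℚ_[p]) ^ k * (1 - (x : ℚ_[p])) ^ (m - k))
      = ∑ l ∈ range (d + 1), a l *
          ((1 / (p : ℚ_[p]) ^ N) * ∑ x ∈ range (p ^ N), (x : ℚ_[p]) ^ (2 * k + l)) := by
    intro N
    simp_rw [hsummand]
    rw [Finset.sum_comm, Finset.mul_sum]
    refine Finset.sum_congr rfl fun l _ => ?_
    rw [← Finset.mul_sum]
    ring
  have hT : Filter.Tendsto
      (fun N : ℕ => ∑ l ∈ range (d + 1), a l *
          ((1 / (p : ℚ_[p]) ^ N) * ∑ x ∈ range (p ^ N), (x : ℚ_[p]) ^ (2 * k + l)))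
      Filter.atTop
      (nhds (∑ l ∈ range (d + 1), a l * ((bernoulli (2 * k + l) : ℚ) : ℚ_[p]))) :=
    tendsto_finset_sum _ fun l _ => (aux_volkenborn_pow p (2 * k + l)).const_mul _
  have hval : (∑ l ∈ range (d + 1), a l * ((bernoulli (2 * k + l) : ℚ) : ℚ_[p]))
      = (((n.choose k : ℚ) * (m.choose k : ℚ) *
        ∑ l ∈ Finset.range (d + 1),
          ((d).choose l : ℚ) * (-1 : ℚ) ^ l * bernoulli (2 * k + l) : ℚ) : ℚ_[p]) := by
    push_cast
    rw [Finset.mul_sum]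
    refine Finset.sum_congr rfl fun l _ => ?_
    rw [ha]
    ring
  rw [funext hseq, ← hval] at *
  exact hT
end

section
/- Let p be a prime and let k, n, m, s be natural numbers with k ≤ n, k ≤ m, and k ≤ s. Then, in ℚ_p, the sequence N ↦ (1/p^N) · ∑_{x=0}^{p^N − 1} B_{k,n}(x) · B_{k,m}(x) · B_{k,s}(x) tends (as N → ∞) to the rational number C(n,k) C(m,k) C(s,k) · ∑_{l=0}^{n+m+s−3k} C(n+m+s−3k, l) (−1)^l B_{3k+l}, cast into ℚ_p. (Equivalently, ∫_{ℤ_p} B_{k,n}(x) B_{k,m}(x) B_{k,s}(x) dμ₁(x) = C(n,k)C(m,k)C(s,k) ∑_{l=0}^{n+m+s−3k} C(n+m+s−3k,l)(−1)^l B_{3k+l}.) -/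
lemma volkenborn_pow (p : ℕ) [Fact p.Prime] (j : ℕ) :
    Filter.Tendsto
      (fun N : ℕ => (1 / (p : ℚ_[p]) ^ N) * ∑ x ∈ Finset.range (p ^ N), (x : ℚ_[p]) ^ j)
      Filter.atTop (nhds ((bernoulli j : ℚ) : ℚ_[p])) := by
  have hp : p.Prime := Fact.out
  have hp0 : (p : ℚ_[p]) ≠ 0 := Nat.cast_ne_zero.mpr hp.ne_zero
  have key : ∀ N : ℕ, (1 / (p : ℚ_[p]) ^ N) * ∑ x ∈ Finset.range (p ^ N), (x : ℚ_[p]) ^ j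
      = ∑ i ∈ Finset.range (j + 1),
          ((bernoulli i * (j + 1).choose i / (j + 1) : ℚ) : ℚ_[p]) * ((p : ℚ_[p]) ^ N) ^ (j - i) := by
    intro N
    have h := sum_range_pow (p ^ N) j
    have hcast : (∑ x ∈ Finset.range (p ^ N), (x : ℚ_[p]) ^ j)
        = ((∑ x ∈ Finset.range (p ^ N), (x : ℚ) ^ j : ℚ) : ℚ_[p]) := by push_cast; ring
    rw [hcast, h]
    push_cast
    rw [Finset.mul_sum]
    refine Finset.sum_congr rfl fun i hi => ?_
    have hij : i ≤ j := Nat.lt_succ_iff.mp (Finset.mem_range.mp hi)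
    have he : j + 1 - i = (j - i) + 1 := by omega
    have ht : ((p:ℚ_[p])^N) ≠ 0 := pow_ne_zero _ hp0
    have hd : ((j:ℚ_[p]) + 1) ≠ 0 := Nat.cast_add_one_ne_zero j
    rw [he, pow_succ]
    push_cast
    field_simp
  simp only [key]
  have hlim : Filter.Tendsto (fun N : ℕ => (p : ℚ_[p]) ^ N) Filter.atTop (nhds 0) := by
    apply tendsto_pow_atTop_nhds_zero_of_norm_lt_one
    rw [Padic.norm_p]
    have : (1 : ℝ) < p := by exact_mod_cast hp.one_lt
    rw [inv_lt_one_iff₀]; right; exact this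
  have hcont : Filter.Tendsto
      (fun t : ℚ_[p] => ∑ i ∈ Finset.range (j + 1),
        ((bernoulli i * (j + 1).choose i / (j + 1) : ℚ) : ℚ_[p]) * t ^ (j - i))
      (nhds 0) (nhds ((bernoulli j : ℚ) : ℚ_[p])) := by
    have hc : Continuous (fun t : ℚ_[p] => ∑ i ∈ Finset.range (j + 1),
        ((bernoulli i * (j + 1).choose i / (j + 1) : ℚ) : ℚ_[p]) * t ^ (j - i)) := by
      continuity
    have := hc.tendsto 0
    convert this using 2
    rw [Finset.sum_eq_single j]
    · have hd : ((j:ℚ) + 1) ≠ 0 := by positivity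
      rw [Nat.sub_self, pow_zero, mul_one, Nat.choose_succ_self_right]
      have hd' : ((j:ℚ_[p]) + 1) ≠ 0 := Nat.cast_add_one_ne_zero j
      push_cast
      rw [mul_div_assoc, div_self hd', mul_one]
    · intro i hi hij
      have : j - i ≠ 0 := by
        have := Nat.lt_succ_iff.mp (Finset.mem_range.mp hi)
        omega
      simp [zero_pow this]
    · intro h; exact absurd (Finset.self_mem_range_succ j) h
  exact hcont.comp hlim

/-- `∫_{ℤ_p} B_{k,n}(x) B_{k,m}(x) B_{k,s}(x) dμ₁(x)
    = C(n,k)C(m,k)C(s,k) ∑_{l=0}^{n+m+s−3k} C(n+m+s−3k,l)(−1)^l B_{3k+l}`. -/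
theorem volkenborn_bernstein_triple_mul (p : ℕ) [Fact p.Prime] (n m s k : ℕ)
    (hkn : k ≤ n) (hkm : k ≤ m) (hks : k ≤ s) :
    Filter.Tendsto
      (fun N : ℕ => (1 / (p : ℚ_[p]) ^ N) *
        ∑ x ∈ Finset.range (p ^ N),
          ((n.choose k : ℚ_[p]) * (x : ℚ_[p]) ^ k * (1 - (x : ℚ_[p])) ^ (n - k)) *
          ((m.choose k : ℚ_[p]) * (x : ℚ_[p]) ^ k * (1 - (x : ℚ_[p])) ^ (m - k)) *
          ((s.choose k : ℚ_[p]) * (x : ℚ_[p]) ^ k * (1 - (x : ℚ_[p])) ^ (s - k)))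
      Filter.atTop
      (nhds (((n.choose k : ℚ) * (m.choose k : ℚ) * (s.choose k : ℚ) *
        ∑ l ∈ Finset.range (n + m + s - 3 * k + 1),
          ((n + m + s - 3 * k).choose l : ℚ) * (-1 : ℚ) ^ l *
            bernoulli (3 * k + l) : ℚ) : ℚ_[p])) := by
  set M := n + m + s - 3 * k with hMdef
  set D : ℚ_[p] := (n.choose k : ℚ_[p]) * (m.choose k : ℚ_[p]) * (s.choose k : ℚ_[p]) with hD
  set c : ℕ → ℚ_[p] := fun l => D * ((M.choose l : ℚ_[p]) * (-1 : ℚ_[p]) ^ l) with hc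
  have hx : ∀ x : ℕ,
      ((n.choose k : ℚ_[p]) * (x : ℚ_[p]) ^ k * (1 - (x : ℚ_[p])) ^ (n - k)) *
      ((m.choose k : ℚ_[p]) * (x : ℚ_[p]) ^ k * (1 - (x : ℚ_[p])) ^ (m - k)) *
      ((s.choose k : ℚ_[p]) * (x : ℚ_[p]) ^ k * (1 - (x : ℚ_[p])) ^ (s - k))
      = ∑ l ∈ Finset.range (M + 1), c l * (x : ℚ_[p]) ^ (3 * k + l) := by
    intro x
    set X : ℚ_[p] := (x : ℚ_[p])
    have hM : (n - k) + ((m - k) + (s - k)) = M := by omega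
    have h1 : ((n.choose k : ℚ_[p]) * X ^ k * (1 - X) ^ (n - k)) *
        ((m.choose k : ℚ_[p]) * X ^ k * (1 - X) ^ (m - k)) *
        ((s.choose k : ℚ_[p]) * X ^ k * (1 - X) ^ (s - k))
        = D * (X ^ (3 * k) * (1 - X) ^ M) := by
      rw [← hM, hD]; ring
    have h2 : (1 - X) ^ M = ∑ l ∈ Finset.range (M + 1),
        (-1 : ℚ_[p]) ^ l * X ^ l * (M.choose l : ℚ_[p]) := by
      have : (1 : ℚ_[p]) - X = (-X) + 1 := by ring
      rw [this, add_pow]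
      exact Finset.sum_congr rfl fun l _ => by rw [one_pow, neg_pow]; ring
    rw [h1, h2]
    simp only [Finset.mul_sum]
    refine Finset.sum_congr rfl fun l _ => ?_
    rw [hc, pow_add]; ring
  have key : ∀ N : ℕ, (1 / (p : ℚ_[p]) ^ N) *
      ∑ x ∈ Finset.range (p ^ N),
        ((n.choose k : ℚ_[p]) * (x : ℚ_[p]) ^ k * (1 - (x : ℚ_[p])) ^ (n - k)) *
        ((m.choose k : ℚ_[p]) * (x : ℚ_[p]) ^ k * (1 - (x : ℚ_[p])) ^ (m - k)) *
        ((s.choose k : ℚ_[p]) * (x : ℚ_[p]) ^ k * (1 - (x : ℚ_[p])) ^ (s - k))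
      = ∑ l ∈ Finset.range (M + 1), c l *
          ((1 / (p : ℚ_[p]) ^ N) * ∑ x ∈ Finset.range (p ^ N), (x : ℚ_[p]) ^ (3 * k + l)) := by
    intro N
    simp only [hx]
    rw [Finset.sum_comm, Finset.mul_sum]
    refine Finset.sum_congr rfl fun l _ => ?_
    rw [Finset.mul_sum, Finset.mul_sum, Finset.mul_sum]
    exact Finset.sum_congr rfl fun x _ => by ring
  simp only [key]
  have htarget : (((n.choose k : ℚ) * (m.choose k : ℚ) * (s.choose k : ℚ) *
        ∑ l ∈ Finset.range (n + m + s - 3 * k + 1),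
          ((n + m + s - 3 * k).choose l : ℚ) * (-1 : ℚ) ^ l *
            bernoulli (3 * k + l) : ℚ) : ℚ_[p])
      = ∑ l ∈ Finset.range (M + 1), c l * ((bernoulli (3 * k + l) : ℚ) : ℚ_[p]) := by
    rw [← hMdef]
    push_cast
    rw [Finset.mul_sum]
    exact Finset.sum_congr rfl fun l _ => by rw [hc, hD]; push_cast; ring
  rw [htarget]
  exact tendsto_finset_sum _ fun l _ => (volkenborn_pow p (3 * k + l)).const_mul (c l)
end

section
/- Let p be a prime, s ≥ 1 a natural number, k a natural number, n₁, …, n_s natural numbers with k ≤ n_i for every i, and m₁, …, m_s natural numbers. Write M = m₁ + ⋯ + m_s and T = n₁m₁ + ⋯ + n_s m_s. Then, in ℚ_p, the sequence N ↦ (1/p^N) · ∑_{x=0}^{p^N − 1} ∏_{i=1}^{s} (B_{k,n_i}(x))^{m_i} tends (as N → ∞) to the rational number (∏_{i=1}^{s} C(n_i, k)^{m_i}) · ∑_{l=0}^{T − M·k} C(T − M·k, l) (−1)^l B_{M·k + l}, cast into ℚ_p. (Equivalently, ∫_{ℤ_p} B_{k,n₁}^{m₁}(x) ⋯ B_{k,n_s}^{m_s}(x)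 dμ₁(x) = C(n₁,k)^{m₁} ⋯ C(n_s,k)^{m_s} ∑_{l=0}^{T−Mk} C(T−Mk, l)(−1)^l B_{Mk+l}.) -/
open Filter Finset

lemma volk_pow (p : ℕ) [Fact p.Prime] (n : ℕ) :
    Tendsto (fun N : ℕ => (1 / (p : ℚ_[p]) ^ N) * ∑ x ∈ Finset.range (p ^ N), (x : ℚ_[p]) ^ n)
      atTop (nhds ((bernoulli n : ℚ) : ℚ_[p])) := by
  have hp : (p : ℚ_[p]) ≠ 0 := by
    exact_mod_cast Nat.cast_ne_zero.mpr (Fact.out : p.Prime).ne_zero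
  have key : ∀ N : ℕ, (1 / (p : ℚ_[p]) ^ N) * ∑ x ∈ Finset.range (p ^ N), (x : ℚ_[p]) ^ n
      = ∑ i ∈ Finset.range (n + 1),
          ((bernoulli i * ((n + 1).choose i) / (n + 1) : ℚ) : ℚ_[p]) * ((p : ℚ_[p]) ^ (n - i)) ^ N := by
    intro N
    have h1 : ∑ x ∈ Finset.range (p ^ N), (x : ℚ_[p]) ^ n
        = (((∑ x ∈ Finset.range (p ^ N), (x : ℚ) ^ n) : ℚ) : ℚ_[p]) := by push_cast; ring
    rw [h1, sum_range_pow, Rat.cast_sum, Finset.mul_sum]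
    refine Finset.sum_congr rfl fun i hi => ?_
    have hi' : i ≤ n := Nat.lt_succ_iff.mp (Finset.mem_range.mp hi)
    have he : n + 1 - i = (n - i) + 1 := by omega
    push_cast
    rw [he, ← pow_mul, ← pow_mul]
    have : N * ((n - i) + 1) = N * (n - i) + N := by ring
    rw [this, pow_add]
    have hpN : (p : ℚ_[p]) ^ N ≠ 0 := pow_ne_zero _ hp
    have hn1 : ((n : ℚ_[p]) + 1) ≠ 0 := by
      have h : ((n + 1 : ℕ) : ℚ_[p]) ≠ 0 := Nat.cast_ne_zero.mpr (Nat.succ_ne_zero n)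
      push_cast at h; exact h
    field_simp
    ring
  simp only [key]
  have lim : ∀ i ∈ Finset.range (n + 1),
      Tendsto (fun N : ℕ => ((bernoulli i * ((n + 1).choose i) / (n + 1) : ℚ) : ℚ_[p]) * ((p : ℚ_[p]) ^ (n - i)) ^ N)
        atTop (nhds (if i = n then ((bernoulli n : ℚ) : ℚ_[p]) else 0)) := by
    intro i hi
    have hi' : i ≤ n := Nat.lt_succ_iff.mp (Finset.mem_range.mp hi)
    rcases eq_or_lt_of_le hi' with rfl | hlt
    · simp only [if_pos rfl, Nat.sub_self, pow_zero, one_pow, mul_one]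
      have hqq : (bernoulli i * ((i + 1).choose i) / (i + 1) : ℚ) = bernoulli i := by
        rw [Nat.choose_succ_self_right]
        have h0 : ((i : ℚ) + 1) ≠ 0 := by positivity
        push_cast
        field_simp
      rw [hqq]
      exact tendsto_const_nhds
    · rw [if_neg (by omega)]
      have hnorm : ‖(p : ℚ_[p]) ^ (n - i)‖ < 1 := by
        rw [norm_pow]
        exact pow_lt_one₀ (norm_nonneg _) Padic.norm_p_lt_one (by omega)
      have := (tendsto_pow_atTop_nhds_zero_of_norm_lt_one hnorm).const_mul
        ((bernoulli i * ((n + 1).choose i) / (n + 1) : ℚ) : ℚ_[p])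
      simpa using this
  have := tendsto_finset_sum (Finset.range (n + 1)) lim
  simpa [Finset.sum_ite_eq' (Finset.range (n+1)) n] using this

/-- `∫_{ℤ_p} B_{k,n₁}^{m₁}(x) ⋯ B_{k,n_s}^{m_s}(x) dμ₁(x)
    = C(n₁,k)^{m₁} ⋯ C(n_s,k)^{m_s} ∑_{l=0}^{T−Mk} C(T−Mk,l)(−1)^l B_{Mk+l}`,
where `M = m₁ + ⋯ + m_s` and `T = n₁m₁ + ⋯ + n_s m_s`. -/
theorem volkenborn_bernstein_pow_prod (p : ℕ) [Fact p.Prime] (s : ℕ) (hs : 1 ≤ s) (k : ℕ)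
    (n m : Fin s → ℕ) (hk : ∀ i, k ≤ n i) :
    Filter.Tendsto
      (fun N : ℕ => (1 / (p : ℚ_[p]) ^ N) *
        ∑ x ∈ Finset.range (p ^ N), ∏ i : Fin s,
          (((n i).choose k : ℚ_[p]) * (x : ℚ_[p]) ^ k *
            (1 - (x : ℚ_[p])) ^ (n i - k)) ^ (m i))
      Filter.atTop
      (nhds (((∏ i : Fin s, ((n i).choose k : ℚ) ^ (m i)) *
        ∑ l ∈ Finset.range ((∑ i : Fin s, n i * m i) - (∑ i : Fin s, m i) * k + 1),
          (((∑ i : Fin s, n i * m i) - (∑ i : Fin s, m i) * k).choose l : ℚ) * (-1 : ℚ) ^ l *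
            bernoulli ((∑ i : Fin s, m i) * k + l) : ℚ) : ℚ_[p])) := by
  set M := ∑ i : Fin s, m i with hM
  set T := ∑ i : Fin s, n i * m i with hT
  set d := T - M * k with hdd
  have hd : ∑ i : Fin s, (n i - k) * m i = d := by
    calc ∑ i : Fin s, (n i - k) * m i = ∑ i : Fin s, (n i * m i - k * m i) :=
          Finset.sum_congr rfl fun i _ => by rw [Nat.sub_mul]
      _ = (∑ i : Fin s, n i * m i) - ∑ i : Fin s, k * m i :=
          Finset.sum_tsub_distrib Finset.univ fun i _ => Nat.mul_le_mul_right _ (hk i)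
      _ = d := by rw [hdd, hT, ← Finset.mul_sum, mul_comm k M]
  have hprod : ∀ y : ℚ_[p],
      ∏ i : Fin s, (((n i).choose k : ℚ_[p]) * y ^ k * (1 - y) ^ (n i - k)) ^ (m i)
        = (∏ i : Fin s, ((n i).choose k : ℚ_[p]) ^ (m i)) * (y ^ (M * k) * (1 - y) ^ d) := by
    intro y
    simp only [mul_pow, Finset.prod_mul_distrib, ← pow_mul, Finset.prod_pow_eq_pow_sum]
    rw [hd, ← Finset.mul_sum, mul_comm k M, mul_assoc]
  have hexp : ∀ y : ℚ_[p], (1 - y) ^ d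
      = ∑ l ∈ Finset.range (d + 1), (-1 : ℚ_[p]) ^ l * y ^ l * ((d.choose l : ℚ_[p])) := by
    intro y
    rw [sub_eq_add_neg, add_comm, add_pow]
    refine Finset.sum_congr rfl fun l _ => ?_
    rw [neg_pow, one_pow, mul_one]
  have hfun : ∀ N : ℕ, (1 / (p : ℚ_[p]) ^ N) *
        ∑ x ∈ Finset.range (p ^ N), ∏ i : Fin s,
          (((n i).choose k : ℚ_[p]) * (x : ℚ_[p]) ^ k *
            (1 - (x : ℚ_[p])) ^ (n i - k)) ^ (m i)
      = (∏ i : Fin s, ((n i).choose k : ℚ_[p]) ^ (m i)) *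
          ∑ l ∈ Finset.range (d + 1), ((d.choose l : ℚ_[p]) * (-1 : ℚ_[p]) ^ l) *
            ((1 / (p : ℚ_[p]) ^ N) * ∑ x ∈ Finset.range (p ^ N), (x : ℚ_[p]) ^ (M * k + l)) := by
    intro N
    simp only [hprod, hexp, Finset.mul_sum]
    rw [Finset.sum_comm]
    refine Finset.sum_congr rfl fun x _ => Finset.sum_congr rfl fun l _ => ?_
    rw [pow_add]
    ring
  rw [show (fun N : ℕ => (1 / (p : ℚ_[p]) ^ N) *
        ∑ x ∈ Finset.range (p ^ N), ∏ i : Fin s,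
          (((n i).choose k : ℚ_[p]) * (x : ℚ_[p]) ^ k *
            (1 - (x : ℚ_[p])) ^ (n i - k)) ^ (m i)) = _ from funext hfun]
  have hlim := Filter.Tendsto.const_mul (∏ i : Fin s, ((n i).choose k : ℚ_[p]) ^ (m i))
    (tendsto_finset_sum (Finset.range (d + 1)) (fun l _ =>
      Filter.Tendsto.const_mul ((d.choose l : ℚ_[p]) * (-1 : ℚ_[p]) ^ l) (volk_pow p (M * k + l))))
  convert hlim using 2
  push_cast
  ring
end

section
/- Let p be a prime, s ≥ 1 a natural number, k₁, …, k_s and n₁, …, n_s natural numbers with k_i ≤ n_i for every i, and m₁, …, m_s natural numbers. Write K = k₁m₁ + ⋯ + k_s m_s and T = n₁m₁ + ⋯ + n_s m_s. Then, in ℚ_p, the sequence N ↦ (1/p^N) · ∑_{x=0}^{p^N − 1} ∏_{i=1}^{s} (B_{k_i,n_i}(x))^{m_i} tends (as N → ∞) to the rational number (∏_{i=1}^{s} C(n_i, k_i)^{m_i}) · ∑_{l=0}^{T − K} C(T − K, l) (−1)^l B_{K + l}, cast into ℚ_p. (Equivalently, ∫_{ℤ_p} B_{k₁,n₁}^{m₁}(x)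 ⋯ B_{k_s,n_s}^{m_s}(x) dμ₁(x) = C(n₁,k₁)^{m₁} ⋯ C(n_s,k_s)^{m_s} ∑_{l=0}^{T−K} C(T−K, l)(−1)^l B_{K+l}.) -/
open Filter Finset in

lemma tendsto_volkenborn_monomial (p : ℕ) [Fact p.Prime] (n : ℕ) :
    Tendsto (fun N : ℕ => (1 / (p : ℚ_[p]) ^ N) * ∑ x ∈ range (p ^ N), (x : ℚ_[p]) ^ n)
      atTop (nhds ((bernoulli n : ℚ) : ℚ_[p])) := by
  have hp : p.Prime := Fact.out
  have hp0 : (p : ℚ_[p]) ≠ 0 := Nat.cast_ne_zero.mpr hp.ne_zero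
  have key : ∀ N : ℕ, (1 / (p : ℚ_[p]) ^ N) * ∑ x ∈ range (p ^ N), (x : ℚ_[p]) ^ n
      = ∑ i ∈ range (n + 1),
          ((bernoulli i * ((n + 1).choose i) / (n + 1) : ℚ) : ℚ_[p]) *
            (p : ℚ_[p]) ^ (N * (n - i)) := by
    intro N
    have h1 : ∑ x ∈ range (p ^ N), (x : ℚ_[p]) ^ n
        = ((∑ x ∈ range (p ^ N), (x : ℚ) ^ n : ℚ) : ℚ_[p]) := by push_cast; rfl
    rw [h1, _root_.sum_range_pow]
    push_cast
    rw [Finset.mul_sum]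
    apply Finset.sum_congr rfl
    intro i hi
    have hi' : i ≤ n := Nat.lt_succ_iff.mp (mem_range.mp hi)
    have hpow : ((p : ℚ_[p]) ^ N) ^ (n + 1 - i) = (p : ℚ_[p]) ^ N * (p : ℚ_[p]) ^ (N * (n - i)) := by
      rw [← pow_mul, ← pow_add]
      congr 1
      have : n + 1 - i = (n - i) + 1 := by omega
      rw [this]; ring_nf
    rw [hpow]
    have hP : (p:ℚ_[p])^N ≠ 0 := pow_ne_zero _ hp0
    have hn1 : ((n:ℚ_[p]) + 1) ≠ 0 := Nat.cast_add_one_ne_zero n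
    field_simp
  simp only [key]
  have hlim : ((bernoulli n : ℚ) : ℚ_[p])
      = ∑ i ∈ range (n + 1),
          (if i = n then ((bernoulli n : ℚ) : ℚ_[p]) else 0) := by
    rw [Finset.sum_ite_eq' (range (n+1)) n]
    simp
  rw [hlim]
  apply tendsto_finset_sum
  intro i hi
  have hi' : i ≤ n := Nat.lt_succ_iff.mp (mem_range.mp hi)
  rcases eq_or_lt_of_le hi' with h | h
  · subst h
    simp only [if_pos rfl, Nat.sub_self, Nat.mul_zero, pow_zero, mul_one]
    have : ((bernoulli i * ((i + 1).choose i) / (i + 1) : ℚ) : ℚ_[p]) = ((bernoulli i : ℚ) : ℚ_[p]) := by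
      rw [Nat.choose_succ_self_right]
      have h1 : ((i:ℚ_[p]) + 1) ≠ 0 := Nat.cast_add_one_ne_zero i
      push_cast
      rw [mul_div_assoc, div_self h1, mul_one]
    rw [this]
    exact tendsto_const_nhds
  · rw [if_neg (by omega)]
    have h0 : Tendsto (fun N : ℕ => (p : ℚ_[p]) ^ (N * (n - i))) atTop (nhds 0) := by
      have h1 : Tendsto (fun N : ℕ => N * (n - i)) atTop atTop := by
        apply tendsto_atTop_mono (f := id)
        · intro N; simpa using Nat.le_mul_of_pos_right N (by omega : 0 < n - i)
        · exact tendsto_id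
      exact (tendsto_pow_atTop_nhds_zero_of_norm_lt_one Padic.norm_p_lt_one).comp h1
    simpa using h0.const_mul (((bernoulli i * ((n + 1).choose i) / (n + 1) : ℚ) : ℚ_[p]))



/-- `∫_{ℤ_p} B_{k₁,n₁}^{m₁}(x) ⋯ B_{k_s,n_s}^{m_s}(x) dμ₁(x)
    = C(n₁,k₁)^{m₁} ⋯ C(n_s,k_s)^{m_s} ∑_{l=0}^{T−K} C(T−K,l)(−1)^l B_{K+l}`,
where `K = k₁m₁ + ⋯ + k_s m_s` and `T = n₁m₁ + ⋯ + n_s m_s`. -/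
theorem volkenborn_bernstein_general_prod (p : ℕ) [Fact p.Prime] (s : ℕ) (hs : 1 ≤ s)
    (k n m : Fin s → ℕ) (hk : ∀ i, k i ≤ n i) :
    Filter.Tendsto
      (fun N : ℕ => (1 / (p : ℚ_[p]) ^ N) *
        ∑ x ∈ Finset.range (p ^ N), ∏ i : Fin s,
          (((n i).choose (k i) : ℚ_[p]) * (x : ℚ_[p]) ^ (k i) *
            (1 - (x : ℚ_[p])) ^ (n i - k i)) ^ (m i))
      Filter.atTop
      (nhds (((∏ i : Fin s, ((n i).choose (k i) : ℚ) ^ (m i)) *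
        ∑ l ∈ Finset.range ((∑ i : Fin s, n i * m i) - (∑ i : Fin s, k i * m i) + 1),
          (((∑ i : Fin s, n i * m i) - (∑ i : Fin s, k i * m i)).choose l : ℚ) *
            (-1 : ℚ) ^ l *
            bernoulli ((∑ i : Fin s, k i * m i) + l) : ℚ) : ℚ_[p])) := by
  classical
  set K := ∑ i : Fin s, k i * m i with hK
  set T := ∑ i : Fin s, n i * m i with hT
  set d := T - K with hd
  set C : ℚ_[p] := ∏ i : Fin s, ((n i).choose (k i) : ℚ_[p]) ^ (m i) with hC
  have hsum : ∑ i : Fin s, (n i - k i) * m i = d := by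
    have h1 : ∑ i : Fin s, (n i - k i) * m i + K = T := by
      rw [hK, hT, ← Finset.sum_add_distrib]
      exact Finset.sum_congr rfl fun i _ => by
        rw [← add_mul, Nat.sub_add_cancel (hk i)]
    omega
  have hpt : ∀ y : ℚ_[p],
      ∏ i : Fin s, (((n i).choose (k i) : ℚ_[p]) * y ^ (k i) *
        (1 - y) ^ (n i - k i)) ^ (m i)
      = C * ∑ l ∈ Finset.range (d + 1),
          ((d.choose l : ℚ_[p]) * (-1 : ℚ_[p]) ^ l) * y ^ (K + l) := by
    intro y
    have h1 : ∏ i : Fin s, (((n i).choose (k i) : ℚ_[p]) * y ^ (k i) *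
        (1 - y) ^ (n i - k i)) ^ (m i)
        = C * y ^ K * (1 - y) ^ d := by
      simp only [mul_pow, Finset.prod_mul_distrib, ← pow_mul]
      rw [Finset.prod_pow_eq_pow_sum, Finset.prod_pow_eq_pow_sum, hsum, hK]
    have h2 : (1 - y) ^ d = ∑ l ∈ Finset.range (d + 1),
        (-y) ^ l * (1:ℚ_[p]) ^ (d - l) * (d.choose l : ℚ_[p]) := by
      rw [show (1 - y) = -y + 1 by ring, add_pow]
    rw [h1, h2, Finset.mul_sum, Finset.mul_sum]
    apply Finset.sum_congr rfl
    intro l _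
    rw [pow_add, neg_pow]
    ring
  have hfun : ∀ N : ℕ, (1 / (p : ℚ_[p]) ^ N) *
        ∑ x ∈ Finset.range (p ^ N), ∏ i : Fin s,
          (((n i).choose (k i) : ℚ_[p]) * (x : ℚ_[p]) ^ (k i) *
            (1 - (x : ℚ_[p])) ^ (n i - k i)) ^ (m i)
      = C * ∑ l ∈ Finset.range (d + 1),
          ((d.choose l : ℚ_[p]) * (-1 : ℚ_[p]) ^ l) *
            ((1 / (p : ℚ_[p]) ^ N) * ∑ x ∈ Finset.range (p ^ N), (x : ℚ_[p]) ^ (K + l)) := by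
    intro N
    simp only [hpt, Finset.mul_sum]
    rw [Finset.sum_comm]
    exact Finset.sum_congr rfl fun l _ => Finset.sum_congr rfl fun x _ => by ring
  have htarget : (((∏ i : Fin s, ((n i).choose (k i) : ℚ) ^ (m i)) *
        ∑ l ∈ Finset.range (d + 1),
          ((d.choose l : ℚ) * (-1 : ℚ) ^ l * bernoulli (K + l)) : ℚ) : ℚ_[p])
      = C * ∑ l ∈ Finset.range (d + 1),
          ((d.choose l : ℚ_[p]) * (-1 : ℚ_[p]) ^ l) * ((bernoulli (K + l) : ℚ) : ℚ_[p]) := by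
    push_cast
    rw [hC]
  rw [show (((∏ i : Fin s, ((n i).choose (k i) : ℚ) ^ (m i)) *
        ∑ l ∈ Finset.range (d + 1),
          ((d.choose l : ℚ) * (-1 : ℚ) ^ l * bernoulli (K + l)) : ℚ) : ℚ_[p])
      = C * ∑ l ∈ Finset.range (d + 1),
          ((d.choose l : ℚ_[p]) * (-1 : ℚ_[p]) ^ l) * ((bernoulli (K + l) : ℚ) : ℚ_[p]) from htarget]
  simp only [hfun]
  exact Filter.Tendsto.const_mul C (tendsto_finset_sum _ fun l _ =>
    (tendsto_volkenborn_monomial p (K + l)).const_mul _)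
end
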